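/- arXiv:2503.17880 — 2 statements merged into one kernel-verified Lean document; each statement's English description precedes it below -/
import Mathlib

section
/- Fix α > 0 and a constant c* ≠ 0. The function k(r) = c*/r^α cannot be written in the form k(r) = ∫₀^∞ M_{u,α}(r) μ(du) for any positive measure μ on (0,∞), where M_{u,α}(r) = ∫₀¹ e^{-zur} z^{α-1} dz. -/
open MeasureTheory

private lemma psi_intable (α u a b : ℝ) (hα : 0 < α) :
    IntervalIntegrable (fun t : ℝ => Real.exp (-t * u) * t ^ (α - 1)) volume a b :=
  (intervalIntegral.intervalIntegrable_rpow' (by linarith)).continuousOn_mul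
    ((Real.continuous_exp.comp (by fun_prop)).continuousOn)

private lemma psi_pos (α u : ℝ) (hα : 0 < α) :
    0 < ∫ t in (1:ℝ)..2, Real.exp (-t * u) * t ^ (α - 1) := by
  apply intervalIntegral.intervalIntegral_pos_of_pos_on (psi_intable α u 1 2 hα)
  · intro x hx
    exact mul_pos (Real.exp_pos _) (Real.rpow_pos_of_pos (by linarith [hx.1]) _)
  · norm_num

/-- Change of variables: `r^α ∫₀¹ e^{-zur} z^{α-1} dz = ∫₀ʳ e^{-tu} t^{α-1} dt`. -/
private lemma scale_eq (α u r : ℝ) (hα : 0 < α) (hr : 0 < r) :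
    r ^ α * ∫ z in Set.Ioc (0:ℝ) 1, Real.exp (-z * u * r) * z ^ (α - 1)
      = ∫ t in (0:ℝ)..r, Real.exp (-t * u) * t ^ (α - 1) := by
  have h1 : (∫ z in Set.Ioc (0:ℝ) 1, Real.exp (-z * u * r) * z ^ (α - 1))
      = ∫ z in (0:ℝ)..1, Real.exp (-z * u * r) * z ^ (α - 1) := by
    rw [intervalIntegral.integral_of_le (by norm_num : (0:ℝ) ≤ 1)]
  have h2 : (∫ z in (0:ℝ)..1, Real.exp (-z * u * r) * z ^ (α - 1))
      = ∫ z in (0:ℝ)..1, r ^ (1 - α) * (Real.exp (-(r * z) * u) * (r * z) ^ (α - 1)) := by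
    rw [intervalIntegral.integral_of_le (by norm_num : (0:ℝ) ≤ 1),
        intervalIntegral.integral_of_le (by norm_num : (0:ℝ) ≤ 1)]
    apply setIntegral_congr_fun measurableSet_Ioc
    intro z hz
    have hz0 : 0 < z := hz.1
    have hmul : (r * z) ^ (α - 1) = r ^ (α - 1) * z ^ (α - 1) :=
      Real.mul_rpow hr.le hz0.le
    have hrr : r ^ (1 - α) * r ^ (α - 1) = 1 := by
      rw [← Real.rpow_add hr]; norm_num
    calc Real.exp (-z * u * r) * z ^ (α - 1)
        = (r ^ (1 - α) * r ^ (α - 1)) * (Real.exp (-(r * z) * u) * z ^ (α - 1)) := by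
          rw [hrr]; ring_nf
      _ = r ^ (1 - α) * (Real.exp (-(r * z) * u) * (r ^ (α - 1) * z ^ (α - 1))) := by ring
      _ = r ^ (1 - α) * (Real.exp (-(r * z) * u) * (r * z) ^ (α - 1)) := by rw [hmul]
  have h3 : (∫ z in (0:ℝ)..1, Real.exp (-(r * z) * u) * (r * z) ^ (α - 1))
      = r⁻¹ • ∫ t in (r * 0)..(r * 1), Real.exp (-t * u) * t ^ (α - 1) :=
    intervalIntegral.integral_comp_mul_left
      (fun t => Real.exp (-t * u) * t ^ (α - 1)) hr.ne'
  rw [h1, h2, intervalIntegral.integral_const_mul, h3]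
  simp only [mul_zero, mul_one, smul_eq_mul]
  have hne : r ^ α ≠ 0 := (Real.rpow_pos_of_pos hr α).ne'
  have haux : r ^ α * r ^ (1 - α) = r := by
    rw [← Real.rpow_add hr, show α + (1 - α) = 1 by ring, Real.rpow_one]
  have : r ^ α * (r ^ (1 - α) * (r⁻¹ * 1)) = 1 := by
    rw [mul_one, ← mul_assoc, haux, mul_inv_cancel₀ hr.ne']
  calc r ^ α * (r ^ (1 - α) * (r⁻¹ * ∫ t in (0:ℝ)..r, Real.exp (-t * u) * t ^ (α - 1)))
      = (r ^ α * (r ^ (1 - α) * (r⁻¹ * 1))) * ∫ t in (0:ℝ)..r, Real.exp (-t * u) * t ^ (α - 1) := by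
        ring
    _ = _ := by rw [this, one_mul]

/-- For `α > 0` and `c* ≠ 0`, the function `k(r) = c*/r^α` admits no
representation `k(r) = ∫₀^∞ M_{u,α}(r) μ(du)` for a positive measure `μ` on
`(0,∞)`, where `M_{u,α}(r) = ∫₀¹ e^{-zur} z^{α-1} dz`. -/
theorem no_M_representation_of_power (α c : ℝ) (hα : 0 < α) (hc : c ≠ 0) :
    ¬ ∃ μ : Measure ℝ, μ (Set.Iic 0) = 0 ∧
      ∀ r : ℝ, 0 < r →
        c / r ^ α =
          ∫ u, (∫ z in Set.Ioc (0 : ℝ) 1, Real.exp (-z * u * r) * z ^ (α - 1)) ∂μ := by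
  rintro ⟨μ, -, hrep⟩
  -- notation
  set I : ℝ → ℝ → ℝ :=
    fun r u => ∫ z in Set.Ioc (0 : ℝ) 1, Real.exp (-z * u * r) * z ^ (α - 1) with hI
  set G : ℝ → ℝ → ℝ :=
    fun r u => ∫ t in (0:ℝ)..r, Real.exp (-t * u) * t ^ (α - 1) with hGdef
  have hrpow : ∀ r : ℝ, 0 < r → (r:ℝ) ^ α ≠ 0 :=
    fun r hr => (Real.rpow_pos_of_pos hr α).ne'
  -- integrability of `I r` w.r.t. μ
  have hint : ∀ r : ℝ, 0 < r → Integrable (I r) μ := by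
    intro r hr
    by_contra h
    have h' := hrep r hr
    rw [integral_undef h] at h'
    rcases div_eq_zero_iff.mp h' with h'' | h''
    · exact hc h''
    · exact hrpow r hr h''
  -- ∫ G r dμ = c for every r > 0
  have hG : ∀ r : ℝ, 0 < r → ∫ u, G r u ∂μ = c := by
    intro r hr
    have hcongr : ∀ u, G r u = r ^ α * I r u := fun u => (scale_eq α u r hα hr).symm
    calc (∫ u, G r u ∂μ) = ∫ u, r ^ α * I r u ∂μ := by simp_rw [hcongr]
      _ = r ^ α * ∫ u, I r u ∂μ := integral_const_mul _ _
      _ = r ^ α * (c / r ^ α) := by rw [← hrep r hr]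
      _ = c := by field_simp
  have hGint : ∀ r : ℝ, 0 < r → Integrable (G r) μ := by
    intro r hr
    have hcongr : G r = fun u => r ^ α * I r u :=
      funext fun u => (scale_eq α u r hα hr).symm
    rw [hcongr]
    exact (hint r hr).const_mul _
  -- the difference D u = G 2 u - G 1 u is strictly positive and has μ-integral 0
  set D : ℝ → ℝ := fun u => ∫ t in (1:ℝ)..2, Real.exp (-t * u) * t ^ (α - 1) with hDdef
  have hsplit : ∀ u, G 2 u = G 1 u + D u := by
    intro u
    rw [hGdef, hDdef]
    exact (intervalIntegral.integral_add_adjacent_intervals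
      (psi_intable α u 0 1 hα) (psi_intable α u 1 2 hα)).symm
  have hDint : Integrable D μ := by
    have : D = fun u => G 2 u - G 1 u := funext fun u => by rw [hsplit u]; ring
    rw [this]
    exact (hGint 2 (by norm_num)).sub (hGint 1 one_pos)
  have hDzero : ∫ u, D u ∂μ = 0 := by
    have : ∫ u, D u ∂μ = (∫ u, G 2 u ∂μ) - ∫ u, G 1 u ∂μ := by
      rw [← integral_sub (hGint 2 (by norm_num)) (hGint 1 one_pos)]
      congr 1
      funext u
      rw [hsplit u]; ring
    rw [this, hG 2 (by norm_num), hG 1 one_pos, sub_self]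
  have hDpos : ∀ u, 0 < D u := fun u => psi_pos α u hα
  -- μ must be zero
  have hμuniv : μ Set.univ = 0 := by
    by_contra h
    have hpos : 0 < μ (Function.support D) := by
      have : Function.support D = Set.univ :=
        Set.eq_univ_of_forall fun u => (hDpos u).ne'
      rw [this]
      exact pos_iff_ne_zero.mpr h
    have := (integral_pos_iff_support_of_nonneg_ae
      (Filter.Eventually.of_forall fun u => (hDpos u).le) hDint).mpr hpos
    rw [hDzero] at this
    exact lt_irrefl 0 this
  have hμ : μ = 0 := Measure.measure_univ_eq_zero.mp hμuniv
  have := hrep 1 one_pos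
  rw [hμ] at this
  simp at this
  exact hc this
end

section
/- Let α > 0. If f(r) = ∫₀^∞ M_{u,α}(r) μ(du) for a positive measure μ with 0 < ∫₀^∞ u^{-α} μ(du) < ∞ (where M_{u,α}(r) = ∫₀¹ e^{-zur} z^{α-1} dz), then lim_{r→∞} r^α f(r) = Γ(α) · ∫₀^∞ u^{-α} μ(du); in particular f(r) ~ C/r^α as r → ∞ for a positive constant C. -/
open MeasureTheory Filter Set

/-- If `f(r) = ∫₀^∞ M_{u,α}(r) μ(du)` with `0 < ∫ u^{-α} μ(du) < ∞`, then
`lim_{r→∞} r^α f(r) = Γ(α)·∫ u^{-α} μ(du)`; in particular `f(r) ~ C/r^α` with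
`C > 0`. -/
theorem M_representation_asymptotic (α : ℝ) (hα : 0 < α)
    (μ : Measure ℝ) (hsupp : μ (Set.Iic 0) = 0)
    (hint : Integrable (fun u : ℝ => u ^ (-α)) μ)
    (hpos : 0 < ∫ u, u ^ (-α) ∂μ)
    (f : ℝ → ℝ)
    (hf : ∀ r : ℝ, 0 < r →
      f r = ∫ u, (∫ z in Set.Ioc (0 : ℝ) 1, Real.exp (-z * u * r) * z ^ (α - 1)) ∂μ) :
    Tendsto (fun r : ℝ => r ^ α * f r) atTop
      (nhds (Real.Gamma α * ∫ u, u ^ (-α) ∂μ)) ∧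
      0 < Real.Gamma α * ∫ u, u ^ (-α) ∂μ := by
  have hΓpos : 0 < Real.Gamma α := Real.Gamma_pos_of_pos hα
  refine ⟨?_, mul_pos hΓpos hpos⟩
  set G : ℝ → ℝ := fun t => Real.exp (-t) * t ^ (α - 1) with hGdef
  have hGint : IntegrableOn G (Ioi 0) := Real.GammaIntegral_convergent hα
  have hGamma : Real.Gamma α = ∫ t in Ioi (0:ℝ), G t := Real.Gamma_eq_integral hα
  have hae : ∀ᵐ u ∂μ, 0 < u := by
    rw [ae_iff]
    convert hsupp using 2
    ext x; simp [not_lt]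
  set F : ℝ → ℝ → ℝ := fun r u =>
    r ^ α * ∫ z in Set.Ioc (0 : ℝ) 1, Real.exp (-z * u * r) * z ^ (α - 1) with hFdef
  -- Key identity
  have key : ∀ u : ℝ, 0 < u → ∀ r : ℝ, 0 < r →
      F r u = u ^ (-α) * ∫ t in (0:ℝ)..(u * r), G t := by
    intro u hu r hr
    have hc : 0 < u * r := mul_pos hu hr
    have h1 : (∫ z in Set.Ioc (0:ℝ) 1, Real.exp (-z * u * r) * z ^ (α - 1))
        = ∫ z in (0:ℝ)..1, Real.exp (-z * u * r) * z ^ (α - 1) :=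
      (intervalIntegral.integral_of_le zero_le_one).symm
    have h2 : (∫ z in (0:ℝ)..1, Real.exp (-z * u * r) * z ^ (α - 1))
        = ∫ z in (0:ℝ)..1, (u * r) ^ (1 - α) * G (u * r * z) := by
      refine intervalIntegral.integral_congr fun z hz => ?_
      have hz0 : (0:ℝ) ≤ z := by
        rcases hz with ⟨h, _⟩
        simpa [min_eq_left (zero_le_one' ℝ)] using h
      have : (u * r * z) ^ (α - 1) = (u * r) ^ (α - 1) * z ^ (α - 1) :=
        Real.mul_rpow hc.le hz0
      simp only [hGdef, this]
      have : (u * r) ^ (1 - α) * (u * r) ^ (α - 1) = 1 := by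
        rw [← Real.rpow_add hc]; norm_num
      calc Real.exp (-z * u * r) * z ^ (α - 1)
          = ((u * r) ^ (1 - α) * (u * r) ^ (α - 1)) *
              (Real.exp (-(u * r * z)) * z ^ (α - 1)) := by
            rw [this]; ring_nf
        _ = (u * r) ^ (1 - α) *
              (Real.exp (-(u * r * z)) * ((u * r) ^ (α - 1) * z ^ (α - 1))) := by ring
    have h3 : (∫ z in (0:ℝ)..1, G (u * r * z))
        = (u * r)⁻¹ * ∫ t in (0:ℝ)..(u * r), G t := by
      have := intervalIntegral.integral_comp_mul_left (a := (0:ℝ)) (b := 1) G hc.ne'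
      simpa [mul_comm] using this
    have hpow : r ^ α * ((u * r) ^ (1 - α) * (u * r)⁻¹) = u ^ (-α) := by
      rw [← Real.rpow_neg_one (u * r), ← Real.rpow_add hc,
        Real.mul_rpow hu.le hr.le, ← mul_assoc, mul_comm (r ^ α),
        mul_assoc, ← Real.rpow_add hr]
      rw [show (1 - α + -1 : ℝ) = -α by ring, show α + -α = (0:ℝ) by ring,
        Real.rpow_zero, mul_one]
    rw [hFdef]
    simp only [h1, h2, intervalIntegral.integral_const_mul, h3]
    rw [← hpow]; ring
  -- a.e. pointwise limit
  have hlim : ∀ᵐ u ∂μ, Tendsto (fun r => F r u) atTop (nhds (u ^ (-α) * Real.Gamma α)) := by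
    filter_upwards [hae] with u hu
    have h1 : Tendsto (fun r : ℝ => u * r) atTop atTop :=
      Tendsto.const_mul_atTop hu tendsto_id
    have h2 : Tendsto (fun r : ℝ => ∫ t in (0:ℝ)..(u * r), G t) atTop
        (nhds (∫ t in Ioi (0:ℝ), G t)) :=
      intervalIntegral_tendsto_integral_Ioi 0 hGint h1
    have h3 := h2.const_mul (u ^ (-α))
    rw [← hGamma] at h3
    refine h3.congr' ?_
    filter_upwards [eventually_gt_atTop (0:ℝ)] with r hr
    exact (key u hu r hr).symm
  -- bound
  have hbound : ∀ᶠ r : ℝ in atTop, ∀ᵐ u ∂μ, ‖F r u‖ ≤ Real.Gamma α * u ^ (-α) := by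
    filter_upwards [eventually_gt_atTop (0:ℝ)] with r hr
    filter_upwards [hae] with u hu
    have hc : 0 < u * r := mul_pos hu hr
    have hJnn : 0 ≤ ∫ t in (0:ℝ)..(u * r), G t := by
      refine intervalIntegral.integral_nonneg hc.le fun t ht => ?_
      exact mul_nonneg (Real.exp_nonneg _) (Real.rpow_nonneg ht.1 _)
    have hJle : (∫ t in (0:ℝ)..(u * r), G t) ≤ Real.Gamma α := by
      rw [intervalIntegral.integral_of_le hc.le, hGamma]
      refine setIntegral_mono_set hGint ?_ (HasSubset.Subset.eventuallyLE Ioc_subset_Ioi_self)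
      refine (ae_restrict_iff' measurableSet_Ioi).2 (Eventually.of_forall fun t ht => ?_)
      exact mul_nonneg (Real.exp_nonneg _) (Real.rpow_nonneg (le_of_lt ht) _)
    rw [key u hu r hr, Real.norm_eq_abs, abs_mul,
      abs_of_nonneg (Real.rpow_nonneg hu.le _), abs_of_nonneg hJnn, mul_comm (Real.Gamma α)]
    exact mul_le_mul_of_nonneg_left hJle (Real.rpow_nonneg hu.le _)
  -- measurability
  have hmeas : ∀ r : ℝ, AEStronglyMeasurable (F r) μ := by
    intro r
    refine AEStronglyMeasurable.const_mul ?_ _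
    have hsm : StronglyMeasurable
        (fun p : ℝ × ℝ => Real.exp (-p.2 * p.1 * r) * p.2 ^ (α - 1)) := by
      refine Measurable.stronglyMeasurable ?_
      fun_prop
    exact (hsm.integral_prod_right').aestronglyMeasurable
  have main := tendsto_integral_filter_of_dominated_convergence
    (μ := μ) (F := F) (f := fun u => u ^ (-α) * Real.Gamma α)
    (bound := fun u => Real.Gamma α * u ^ (-α))
    (Eventually.of_forall hmeas) hbound (hint.const_mul _) hlim
  have hfin : (∫ u, u ^ (-α) * Real.Gamma α ∂μ) = Real.Gamma α * ∫ u, u ^ (-α) ∂μ := by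
    rw [integral_mul_const, mul_comm]
  rw [hfin] at main
  refine main.congr' ?_
  filter_upwards [eventually_gt_atTop (0:ℝ)] with r hr
  rw [hf r hr, hFdef, integral_const_mul]
end
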